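/- The pure-state set {|n⟩ (n ≤ d−2), |+⟩} is unitarily informationally complete: Let d ≥ 2, define ψ_n = e_n for n = 0, …, d−2 and ψ_{d−1} = (1/√d)·(e_0 + ⋯ + e_{d−1}). If U and V are d×d unitary matrices satisfying U (ψ_n ψ_n†) U† = V (ψ_n ψ_n†) V† for all n = 0, …, d−1, then U = c·V for some c ∈ ℂ with |c| = 1. -/

import Mathlib

open Matrix

/-- The rank-one (outer-product) matrix `ψψ†`, with entries `ψ_j · conj(ψ_k)`. -/
noncomputable def outerProd {n : Type*} (ψ : n → ℂ) : Matrix n n ℂ :=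
  Matrix.of fun j k => ψ j * star (ψ k)

/-- The probe states `ψ_n = e_n` for `n = 0,…,d−2` and `ψ_{d−1} = (1/√d)(e₀+⋯+e_{d−1})`. -/
noncomputable def basisPlusState (d : ℕ) (n : Fin d) : Fin d → ℂ :=
  if (n : ℕ) = d - 1 then (fun _ => ((1 / Real.sqrt d : ℝ) : ℂ))
  else fun j => if j = n then 1 else 0

/-- **The pure-state set `{|n⟩ (n ≤ d−2), |+⟩}` is unitarily informationally complete.**
Any two unitaries conjugating every `ψ_n ψ_n†` identically agree up to a global phase. -/
theorem basis_plus_UIC (d : ℕ) (hd : 2 ≤ d)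
    (U V : Matrix (Fin d) (Fin d) ℂ) (hU : Uᴴ * U = 1) (hV : Vᴴ * V = 1)
    (h : ∀ n : Fin d,
      U * outerProd (basisPlusState d n) * Uᴴ = V * outerProd (basisPlusState d n) * Vᴴ) :
    ∃ c : ℂ, ‖c‖ = 1 ∧ U = c • V := by
  have hVV' : V * Vᴴ = 1 := mul_eq_one_comm.mp hV
  set W : Matrix (Fin d) (Fin d) ℂ := Vᴴ * U with hWdef
  have hWW : Wᴴ * W = 1 := by
    have : Wᴴ = Uᴴ * V := by simp [hWdef, Matrix.conjTranspose_mul]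
    rw [this, hWdef]
    calc Uᴴ * V * (Vᴴ * U) = Uᴴ * (V * Vᴴ) * U := by simp only [Matrix.mul_assoc]
      _ = 1 := by rw [hVV', Matrix.mul_one, hU]
  have hWW' : W * Wᴴ = 1 := mul_eq_one_comm.mpr hWW
  -- commutation: W * P n = P n * W
  have hcomm : ∀ n : Fin d,
      W * outerProd (basisPlusState d n) = outerProd (basisPlusState d n) * W := by
    intro n
    have h1 : W * outerProd (basisPlusState d n) * Wᴴ = outerProd (basisPlusState d n) := by
      have := h n
      calc W * outerProd (basisPlusState d n) * Wᴴ
          = Vᴴ * (U * outerProd (basisPlusState d n) * Uᴴ) * V := by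
            simp only [hWdef, Matrix.conjTranspose_mul, Matrix.conjTranspose_conjTranspose,
              Matrix.mul_assoc]
        _ = Vᴴ * (V * outerProd (basisPlusState d n) * Vᴴ) * V := by rw [this]
        _ = (Vᴴ * V) * outerProd (basisPlusState d n) * (Vᴴ * V) := by simp only [Matrix.mul_assoc]
        _ = outerProd (basisPlusState d n) := by rw [hV]; simp
    calc W * outerProd (basisPlusState d n)
        = W * outerProd (basisPlusState d n) * (Wᴴ * W) := by rw [hWW, Matrix.mul_one]
      _ = (W * outerProd (basisPlusState d n) * Wᴴ) * W := by simp only [Matrix.mul_assoc]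
      _ = outerProd (basisPlusState d n) * W := by rw [h1]
  -- W is diagonal
  have hdiag : ∀ j k : Fin d, j ≠ k → W j k = 0 := by
    intro j k hjk
    by_cases hj : (j : ℕ) = d - 1
    · -- then k ≠ last; use n := k
      have hk : (k : ℕ) ≠ d - 1 := fun hk => hjk (Fin.ext (hk ▸ hj))
      have := congrFun (congrFun (hcomm k) j) k
      simp only [Matrix.mul_apply, outerProd, basisPlusState, hk, if_false, Matrix.of_apply] at this
      simp [Finset.sum_ite_eq', Finset.sum_ite_eq, hjk, Ne.symm hjk] at this
      exact this
    · -- use n := j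
      have := congrFun (congrFun (hcomm j) j) k
      simp only [Matrix.mul_apply, outerProd, basisPlusState, hj, if_false, Matrix.of_apply] at this
      simp [Finset.sum_ite_eq', Finset.sum_ite_eq, hjk, Ne.symm hjk] at this
      exact this.symm
  -- diagonal entries are all equal
  have hlast : (⟨d - 1, by omega⟩ : Fin d) = (⟨d - 1, by omega⟩ : Fin d) := rfl
  have hconst : ∀ j k : Fin d, W j j = W k k := by
    intro j k
    set nl : Fin d := ⟨d - 1, by omega⟩ with hnl
    have hP : basisPlusState d nl = fun _ => ((1 / Real.sqrt d : ℝ) : ℂ) := by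
      simp [basisPlusState, hnl]
    have := congrFun (congrFun (hcomm nl) j) k
    rw [hP] at this
    simp only [Matrix.mul_apply, outerProd, Matrix.of_apply] at this
    -- this : ∑ a, W j a * (c * star c) = ∑ a, (c * star c) * W a k
    have hsumj : ∀ m : Fin d, (∑ a, W m a) = W m m := by
      intro m
      rw [Finset.sum_eq_single m (fun a _ ha => hdiag m a (Ne.symm ha)) (by simp)]
    have hsumk : ∀ m : Fin d, (∑ a, W a m) = W m m := by
      intro m
      rw [Finset.sum_eq_single m (fun a _ ha => hdiag a m ha) (by simp)]
    have hc : ((1 / Real.sqrt d : ℝ) : ℂ) * star ((1 / Real.sqrt d : ℝ) : ℂ) ≠ 0 := by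
      have hd0 : (0:ℝ) < Real.sqrt d := Real.sqrt_pos.mpr (by positivity)
      simp only [Complex.star_def, Complex.conj_ofReal, ← Complex.ofReal_mul]
      exact_mod_cast mul_ne_zero (by positivity) (by positivity)
    rw [← Finset.sum_mul, ← Finset.mul_sum, hsumj, hsumk] at this
    -- this : W j j * c = c * W k k
    rw [mul_comm] at this
    exact mul_left_cancel₀ hc this
  -- W = c • 1
  set i0 : Fin d := ⟨0, by omega⟩ with hi0
  set c : ℂ := W i0 i0 with hc
  have hW : W = c • (1 : Matrix (Fin d) (Fin d) ℂ) := by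
    ext j k
    by_cases hjk : j = k
    · subst hjk; simp [hc, Matrix.one_apply, hconst j i0]
    · simp [hdiag j k hjk, Matrix.one_apply, hjk]
  -- |c| = 1
  have hcnorm : ‖c‖ = 1 := by
    have := congrFun (congrFun hWW i0) i0
    simp only [Matrix.mul_apply, Matrix.conjTranspose_apply, Matrix.one_apply_eq] at this
    rw [Finset.sum_eq_single i0 (fun a _ ha => by simp [hdiag a i0 ha]) (by simp)] at this
    have : star c * c = 1 := this
    have h2 : (Complex.normSq c : ℂ) = 1 := by
      rw [Complex.normSq_eq_conj_mul_self, ← Complex.star_def, this]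
    have h3 : Complex.normSq c = 1 := by exact_mod_cast h2
    have : ‖c‖ ^ 2 = 1 := by
      rw [Complex.sq_norm, h3]
    nlinarith [norm_nonneg c]
  refine ⟨c, hcnorm, ?_⟩
  calc U = (V * Vᴴ) * U := by rw [hVV', Matrix.one_mul]
    _ = V * W := by rw [hWdef, Matrix.mul_assoc]
    _ = V * (c • 1) := by rw [hW]
    _ = c • V := by simp
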